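/- Let (X_1,Y_1),…,(X_n,Y_n) be i.i.d. from P and (X_{n+1},Y_{n+1}) ~ P̃ independent, with likelihood ratio w(x,y) = dP̃/dP(x,y). Suppose ℓ̂ and û are measurable functions of x with 0 < ℓ̂(x) ≤ û(x), satisfying ℓ̂(X) ≤ w(X,Y) ≤ û(X) P-almost surely. Let V be a fixed score function, V_i = V(X_i,Y_i), let V_{[1]} ≤ … ≤ V_{[n]} be the ordered scores with corresponding ℓ_{[i]} = ℓ̂(X_{[i]}), u_{[i]} = û(X_{[i]}), u_{n+1} = û(X_{n+1}), define F̂(k) = (Σ_{i≤k} ℓ_{[i]}) / (Σ_{i≤k} ℓ_{[i]} + Σ_{i>k} u_{[i]} + u_{n+1}), k* = min{k : F̂(k) ≥ 1−α}, and Ĉ(X_{n+1}) = {y : V(X_{n+1},y) ≤ V_{[k*]}}. Then P̃(Y_{n+1} ∈ Ĉ(X_{n+1})) ≥ 1−α. -/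

import Mathlib

open MeasureTheory Finset
open scoped ENNReal

/-- The thresholding function `F̂(k)` of Algorithm 1, computed from (already sorted)
lower bounds `l`, upper bounds `u` and the test-point upper bound `ulast`. -/
noncomputable def Fhat {n : ℕ} (l u : Fin n → ℝ) (ulast : ℝ) (k : ℕ) : ℝ :=
  (∑ i ∈ univ.filter (fun i : Fin n => (i : ℕ) < k), l i) /
    ((∑ i ∈ univ.filter (fun i : Fin n => (i : ℕ) < k), l i) +
      (∑ i ∈ univ.filter (fun i : Fin n => k ≤ (i : ℕ)), u i) + ulast)

def Covered {𝒳 𝒴 : Type*} (n : ℕ) (V : 𝒳 × 𝒴 → ℝ) (lh uh : 𝒳 → ℝ) (α : ℝ)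
    (d : Fin n → 𝒳 × 𝒴) (z : 𝒳 × 𝒴) : Prop :=
  ∃ π : Equiv.Perm (Fin n),
    Monotone (fun i : Fin n => V (d (π i))) ∧
    ((∀ k, 1 ≤ k → k ≤ n →
        Fhat (fun i => lh (d (π i)).1) (fun i => uh (d (π i)).1) (uh z.1) k < 1 - α) ∨
      (∃ k, 1 ≤ k ∧ k ≤ n ∧
        1 - α ≤ Fhat (fun i => lh (d (π i)).1) (fun i => uh (d (π i)).1) (uh z.1) k ∧
        (∀ j, 1 ≤ j → j < k →
          Fhat (fun i => lh (d (π i)).1) (fun i => uh (d (π i)).1) (uh z.1) j < 1 - α) ∧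
        ∃ hk : k - 1 < n, V z ≤ V (d (π ⟨k - 1, hk⟩))))

/-! ### Auxiliary combinatorial lemmas -/

lemma card_filter_val_lt (n c : ℕ) (hc : c ≤ n) :
    (univ.filter (fun i : Fin n => (i:ℕ) < c)).card = c := by
  have : (univ.filter (fun i : Fin n => (i:ℕ) < c)) = Finset.map (Fin.castLEEmb hc) univ := by
    ext i
    simp only [mem_filter, mem_univ, true_and, Finset.mem_map]
    constructor
    · intro h
      exact ⟨⟨i, h⟩, by simp [Fin.castLEEmb, Fin.ext_iff]⟩
    · rintro ⟨j, rfl⟩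
      simp [Fin.castLEEmb]
  rw [this]; simp

lemma downward_closed_eq_initial {n : ℕ} (T : Finset (Fin n))
    (hT : ∀ p ∈ T, ∀ q, q ≤ p → q ∈ T) :
    T = univ.filter (fun i : Fin n => (i:ℕ) < T.card) := by
  have hcn : T.card ≤ n := by simpa using Finset.card_le_card (Finset.subset_univ T)
  refine (Finset.eq_of_subset_of_card_le ?_ ?_).symm
  · intro q hq
    simp only [mem_filter, mem_univ, true_and] at hq
    by_contra hqT
    have hsub : T ⊆ univ.filter (fun i : Fin n => (i:ℕ) < (q:ℕ)) := by
      intro p hp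
      simp only [mem_filter, mem_univ, true_and]
      by_contra hlt
      exact hqT (hT p hp q (by omega))
    have := Finset.card_le_card hsub
    rw [card_filter_val_lt n q.val (le_of_lt q.2)] at this
    omega
  · rw [card_filter_val_lt n T.card hcn]

lemma Fhat_mono {n : ℕ} (l u : Fin n → ℝ) (ulast : ℝ)
    (hl : ∀ i, 0 ≤ l i) (hlu : ∀ i, l i ≤ u i) (hu : 0 < ulast)
    {k k' : ℕ} (hkk : k ≤ k') : Fhat l u ulast k ≤ Fhat l u ulast k' := by
  classical
  set A := fun m : ℕ => ∑ i ∈ univ.filter (fun i : Fin n => (i : ℕ) < m), l i with hA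
  set B := fun m : ℕ => ∑ i ∈ univ.filter (fun i : Fin n => m ≤ (i : ℕ)), u i with hB
  have hAnn : ∀ m, 0 ≤ A m := fun m => Finset.sum_nonneg fun i _ => hl i
  have hBnn : ∀ m, 0 ≤ B m := fun m => Finset.sum_nonneg fun i _ =>
    le_trans (hl i) (hlu i)
  have hAmono : A k ≤ A k' := by
    apply Finset.sum_le_sum_of_subset_of_nonneg
    · intro i hi; simp only [mem_filter, mem_univ, true_and] at hi ⊢; omega
    · intro i _ _; exact hl i
  have hsplitA : A k' = A k + ∑ i ∈ univ.filter (fun i : Fin n => k ≤ (i:ℕ) ∧ (i:ℕ) < k'), l i := by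
    rw [hA]; dsimp only
    rw [← Finset.sum_filter_add_sum_filter_not (univ.filter (fun i : Fin n => (i:ℕ) < k')) (fun i => (i:ℕ) < k) l]
    congr 1
    · congr 1; ext i; simp only [Finset.mem_filter, mem_univ, true_and]; omega
    · congr 1; ext i; simp only [Finset.mem_filter, mem_univ, true_and]; omega
  have hsplitB : B k = B k' + ∑ i ∈ univ.filter (fun i : Fin n => k ≤ (i:ℕ) ∧ (i:ℕ) < k'), u i := by
    rw [hB]; dsimp only
    rw [← Finset.sum_filter_add_sum_filter_not (univ.filter (fun i : Fin n => k ≤ (i:ℕ))) (fun i => k' ≤ (i:ℕ)) u]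
    congr 1
    · congr 1; ext i; simp only [Finset.mem_filter, mem_univ, true_and]; omega
    · congr 1; ext i; simp only [Finset.mem_filter, mem_univ, true_and]; omega
  have hmid : ∑ i ∈ univ.filter (fun i : Fin n => k ≤ (i:ℕ) ∧ (i:ℕ) < k'), l i
      ≤ ∑ i ∈ univ.filter (fun i : Fin n => k ≤ (i:ℕ) ∧ (i:ℕ) < k'), u i :=
    Finset.sum_le_sum fun i _ => hlu i
  have hden : A k' + B k' + ulast ≤ A k + B k + ulast := by
    rw [hsplitA, hsplitB]; linarith
  have hpos : 0 < A k' + B k' + ulast := by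
    have := hAnn k'; have := hBnn k'; linarith
  show A k / (A k + B k + ulast) ≤ A k' / (A k' + B k' + ulast)
  exact div_le_div₀ (le_trans (hAnn k) hAmono) hAmono hpos hden

/-! ### The deterministic core inequality -/

lemma det_bound {ι : Type*} [Fintype ι] (Vv wv lv uv : ι → ℝ) (α : ℝ)
    (hα : 0 < α ∧ α < 1)
    (hl : ∀ i, 0 < lv i) (hwl : ∀ i, lv i ≤ wv i) (hwu : ∀ i, wv i ≤ uv i) :
    ∑ j ∈ univ.filter (fun j => 1 - α ≤
        (∑ i ∈ univ.filter (fun i => Vv i < Vv j), lv i) /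
        ((∑ i ∈ univ.filter (fun i => Vv i < Vv j), lv i) +
          ∑ i ∈ univ.filter (fun i => ¬ Vv i < Vv j), uv i)), wv j
      ≤ α * ∑ j, wv j := by
  classical
  have hwnn : ∀ i, 0 ≤ wv i := fun i => le_trans (hl i).le (hwl i)
  have hsumw : (0:ℝ) ≤ ∑ j, wv j := Finset.sum_nonneg fun i _ => hwnn i
  set S := univ.filter (fun j => 1 - α ≤
        (∑ i ∈ univ.filter (fun i => Vv i < Vv j), lv i) /
        ((∑ i ∈ univ.filter (fun i => Vv i < Vv j), lv i) +
          ∑ i ∈ univ.filter (fun i => ¬ Vv i < Vv j), uv i)) with hS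
  rcases S.eq_empty_or_nonempty with hSe | hSne
  · rw [hSe]; simp only [Finset.sum_empty]; exact mul_nonneg hα.1.le hsumw
  obtain ⟨j0, hj0S, hj0min⟩ := S.exists_min_image Vv hSne
  set t0 := Vv j0 with ht0
  set L := ∑ i ∈ univ.filter (fun i => Vv i < t0), lv i with hL
  set U := ∑ i ∈ univ.filter (fun i => ¬ Vv i < t0), uv i with hU
  set A := ∑ i ∈ univ.filter (fun i => ¬ Vv i < t0), wv i with hAd
  set B := ∑ i ∈ univ.filter (fun i => Vv i < t0), wv i with hBd
  have hLnn : 0 ≤ L := Finset.sum_nonneg fun i _ => (hl i).le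
  have hUpos : 0 < U := by
    have hj0mem : j0 ∈ univ.filter (fun i => ¬ Vv i < t0) := by
      simp [ht0]
    have : uv j0 ≤ U := Finset.single_le_sum (fun i _ => le_trans (hl i).le (le_trans (hwl i) (hwu i))) hj0mem
    have := lt_of_lt_of_le (hl j0) (le_trans (hwl j0) (hwu j0))
    linarith
  have hG : 1 - α ≤ L / (L + U) := by
    have := (Finset.mem_filter.mp hj0S).2
    exact this
  have hDpos : 0 < L + U := by linarith
  have hLge : (1 - α) * (L + U) ≤ L := by
    rwa [← le_div_iff₀ hDpos]
  have hkey : (1 - α) * U ≤ α * L := by nlinarith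
  have hAU : A ≤ U := Finset.sum_le_sum fun i _ => hwu i
  have hLB : L ≤ B := Finset.sum_le_sum fun i _ => hwl i
  have hAB : B + A = ∑ j, wv j := Finset.sum_filter_add_sum_filter_not univ _ wv
  have hSA : ∑ j ∈ S, wv j ≤ A := by
    apply Finset.sum_le_sum_of_subset_of_nonneg
    · intro j hj
      simp only [mem_filter, mem_univ, true_and]
      exact fun hlt => absurd (hj0min j hj) (not_le.mpr hlt)
    · intro i _ _; exact hwnn i
  have hfinal : A ≤ α * (A + B) := by nlinarith [hα.1, hα.2]
  calc ∑ j ∈ S, wv j ≤ A := hSA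
    _ ≤ α * (A + B) := hfinal
    _ = α * ∑ j, wv j := by rw [← hAB]; ring_nf

/-! ### Not covered implies the "bad" inequality -/

lemma not_covered_bad {𝒳 𝒴 : Type*} (n : ℕ) (V : 𝒳 × 𝒴 → ℝ) (lh uh : 𝒳 → ℝ)
    (α : ℝ) (hlpos : ∀ x, 0 < lh x) (hlu : ∀ x, lh x ≤ uh x)
    (d : Fin n → 𝒳 × 𝒴) (z : 𝒳 × 𝒴)
    (h : ¬ Covered n V lh uh α d z) :
    1 - α ≤ (∑ i ∈ univ.filter (fun i : Fin n => V (d i) < V z), lh (d i).1) /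
      ((∑ i ∈ univ.filter (fun i : Fin n => V (d i) < V z), lh (d i).1) +
        (∑ i ∈ univ.filter (fun i : Fin n => ¬ V (d i) < V z), uh (d i).1) + uh z.1) := by
  classical
  set π : Equiv.Perm (Fin n) := Tuple.sort (fun i => V (d i)) with hπ
  have hmono : Monotone (fun i : Fin n => V (d (π i))) := Tuple.monotone_sort (fun i => V (d i))
  set l : Fin n → ℝ := fun i => lh (d (π i)).1 with hldef
  set u : Fin n → ℝ := fun i => uh (d (π i)).1 with hudef
  have hlnn : ∀ i, 0 ≤ l i := fun i => (hlpos _).le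
  have hlu' : ∀ i, l i ≤ u i := fun i => hlu _
  have hupos : 0 < uh z.1 := lt_of_lt_of_le (hlpos z.1) (hlu z.1)
  have hex : ∃ k, 1 ≤ k ∧ k ≤ n ∧ 1 - α ≤ Fhat l u (uh z.1) k := by
    by_contra hno
    push_neg at hno
    exact h ⟨π, hmono, Or.inl (fun k h1 h2 => lt_of_not_ge fun hle =>
      absurd hle (not_le.mpr (hno k h1 h2)))⟩
  set K := Nat.find hex with hK
  obtain ⟨hK1, hKn, hKF⟩ := Nat.find_spec hex
  have hmin : ∀ j, 1 ≤ j → j < K → Fhat l u (uh z.1) j < 1 - α := by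
    intro j h1 hj
    have := Nat.find_min hex hj
    push_neg at this
    exact this h1 (le_trans (le_of_lt hj) hKn)
  have hk1n : K - 1 < n := by omega
  have hVlt : V (d (π ⟨K - 1, hk1n⟩)) < V z := by
    by_contra hle
    push_neg at hle
    exact h ⟨π, hmono, Or.inr ⟨K, hK1, hKn, hKF, hmin, hk1n, hle⟩⟩
  set T := univ.filter (fun p : Fin n => V (d (π p)) < V z) with hT
  set m := T.card with hm
  have hTdc : ∀ p ∈ T, ∀ q, q ≤ p → q ∈ T := by
    intro p hp q hq
    simp only [hT, mem_filter, mem_univ, true_and] at hp ⊢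
    exact lt_of_le_of_lt (hmono hq) hp
  have hTeq : T = univ.filter (fun i : Fin n => (i:ℕ) < m) := downward_closed_eq_initial T hTdc
  have hmn : m ≤ n := by
    have := Finset.card_le_card (Finset.subset_univ T); simpa using this
  have hKm : K ≤ m := by
    have hsub : univ.filter (fun i : Fin n => (i:ℕ) < K) ⊆ T := by
      intro p hp
      simp only [mem_filter, mem_univ, true_and] at hp
      simp only [hT, mem_filter, mem_univ, true_and]
      have hple : p ≤ (⟨K - 1, hk1n⟩ : Fin n) := by
        have : (p:ℕ) ≤ K - 1 := by omega
        exact this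
      exact lt_of_le_of_lt (hmono hple) hVlt
    have := Finset.card_le_card hsub
    rwa [card_filter_val_lt n K hKn] at this
  have hFm : 1 - α ≤ Fhat l u (uh z.1) m :=
    le_trans hKF (Fhat_mono l u (uh z.1) hlnn hlu' hupos hKm)
  have hsum1 : ∑ i ∈ univ.filter (fun i : Fin n => (i:ℕ) < m), l i
      = ∑ i ∈ univ.filter (fun i : Fin n => V (d i) < V z), lh (d i).1 := by
    rw [← hTeq, hT]
    rw [Finset.sum_filter, Finset.sum_filter]
    exact Equiv.sum_comp π (fun i => if V (d i) < V z then lh (d i).1 else 0)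
  have hsum2 : ∑ i ∈ univ.filter (fun i : Fin n => m ≤ (i:ℕ)), u i
      = ∑ i ∈ univ.filter (fun i : Fin n => ¬ V (d i) < V z), uh (d i).1 := by
    have hmem : ∀ i : Fin n, (V (d (π i)) < V z) ↔ (i:ℕ) < m := by
      intro i
      constructor
      · intro hi
        have : i ∈ T := by simp only [hT, mem_filter, mem_univ, true_and]; exact hi
        rw [hTeq] at this
        simpa using this
      · intro hi
        have : i ∈ T := by rw [hTeq]; simpa using hi
        simpa [hT] using this
    have hcompl : univ.filter (fun i : Fin n => m ≤ (i:ℕ))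
        = univ.filter (fun p : Fin n => ¬ V (d (π p)) < V z) := by
      ext i
      simp only [mem_filter, mem_univ, true_and, hmem i]
      omega
    rw [hcompl]
    rw [Finset.sum_filter, Finset.sum_filter]
    exact Equiv.sum_comp π (fun i => if ¬ V (d i) < V z then uh (d i).1 else 0)
  rw [Fhat, hsum1, hsum2] at hFm
  exact hFm

/-! ### Measure-theoretic plumbing -/

lemma prod_withDensity_apply {A B : Type*} [MeasurableSpace A] [MeasurableSpace B]
    (μ : Measure A) (ν : Measure B) [SigmaFinite μ] [SigmaFinite ν]
    (f : B → ℝ≥0∞) (hf : Measurable f) [SigmaFinite (ν.withDensity f)]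
    {s : Set (A × B)} (hs : MeasurableSet s) :
    (μ.prod (ν.withDensity f)) s = ∫⁻ p, s.indicator (fun p => f p.2) p ∂(μ.prod ν) := by
  rw [Measure.prod_apply hs]
  have hmeas : Measurable (fun p : A × B => s.indicator (fun p => f p.2) p) :=
    (hf.comp measurable_snd).indicator hs
  rw [MeasureTheory.lintegral_prod _ hmeas.aemeasurable]
  congr 1
  ext x
  rw [withDensity_apply _ (measurable_prodMk_left hs),
    ← lintegral_indicator (measurable_prodMk_left hs)]
  refine lintegral_congr fun y => ?_
  by_cases hxy : (x, y) ∈ s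
  · rw [Set.indicator_of_mem hxy, Set.indicator_of_mem (show y ∈ Prod.mk x ⁻¹' s from hxy)]
  · rw [Set.indicator_of_notMem hxy, Set.indicator_of_notMem (show y ∉ Prod.mk x ⁻¹' s from hxy)]

lemma perm_mp {Z : Type*} [MeasurableSpace Z] (P : Measure Z) [IsProbabilityMeasure P]
    (n : ℕ) (e : Equiv.Perm (Fin (n+1))) :
    MeasurePreserving (fun s : Fin (n+1) → Z => s ∘ e)
      (Measure.pi fun _ => P) (Measure.pi fun _ => P) := by
  have h := (measurePreserving_piCongrLeft (fun _ : Fin (n+1) => P) e).symm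
    (MeasurableEquiv.piCongrLeft (fun _ => Z) e)
  convert h using 1
  funext s i
  exact (Equiv.piCongrLeft_symm_apply (P := fun _ => Z) (e := e) s i).symm

lemma eval_mp {Z : Type*} [MeasurableSpace Z] (P : Measure Z) [IsProbabilityMeasure P]
    (n : ℕ) (j : Fin (n+1)) :
    MeasurePreserving (fun s : Fin (n+1) → Z => s j)
      (Measure.pi fun _ => P) P := by
  have h1 := measurePreserving_piFinSuccAbove (fun _ : Fin (n+1) => P) j
  have h2 : MeasurePreserving (Prod.fst : Z × (Fin n → Z) → Z)
      (P.prod (Measure.pi fun _ : Fin n => P)) P := by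
    refine ⟨measurable_fst, ?_⟩
    rw [Measure.map_fst_prod]
    simp
  have h3 := h2.comp h1
  convert h3 using 1
  funext s
  rfl

lemma snoc_mp {Z : Type*} [MeasurableSpace Z] (P : Measure Z) [IsProbabilityMeasure P] (n : ℕ) :
    MeasurePreserving
      (fun s : Fin (n+1) → Z => ((fun i : Fin n => s i.castSucc, s (Fin.last n)) : (Fin n → Z) × Z))
      (Measure.pi fun _ => P) ((Measure.pi fun _ : Fin n => P).prod P) := by
  have h1 := measurePreserving_piFinSuccAbove (fun _ : Fin (n+1) => P) (Fin.last n)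
  have h2 : MeasurePreserving Prod.swap (P.prod (Measure.pi fun _ : Fin n => P))
      ((Measure.pi fun _ : Fin n => P).prod P) := Measure.measurePreserving_swap
  have h3 := h2.comp h1
  convert h3 using 1
  funext s
  show ((fun i : Fin n => s i.castSucc, s (Fin.last n)) : (Fin n → Z) × Z)
      = Prod.swap (MeasurableEquiv.piFinSuccAbove (fun _ => Z) (Fin.last n) s)
  have : (MeasurableEquiv.piFinSuccAbove (fun _ => Z) (Fin.last n) s)
      = (s (Fin.last n), fun i => s ((Fin.last n).succAbove i)) := rfl
  rw [this]
  simp [Prod.swap, Fin.succAbove_last]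


section Bridge

variable {𝒳 𝒴 : Type*} [MeasurableSpace 𝒳] [MeasurableSpace 𝒴]

/-- Sum of lower bounds of points with score `< t`. -/
noncomputable def LS (V : 𝒳 × 𝒴 → ℝ) (lh : 𝒳 → ℝ) {N : ℕ} (s : Fin N → 𝒳 × 𝒴) (t : ℝ) : ℝ :=
  ∑ i, if V (s i) < t then lh (s i).1 else 0

/-- Sum of upper bounds of points with score `≥ t`. -/
noncomputable def US (V : 𝒳 × 𝒴 → ℝ) (uh : 𝒳 → ℝ) {N : ℕ} (s : Fin N → 𝒳 × 𝒴) (t : ℝ) : ℝ :=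
  ∑ i, if ¬ V (s i) < t then uh (s i).1 else 0

/-- The "bad" superset of the non-coverage event. -/
def BadSet (V : 𝒳 × 𝒴 → ℝ) (lh uh : 𝒳 → ℝ) (α : ℝ) (n : ℕ) :
    Set ((Fin n → 𝒳 × 𝒴) × (𝒳 × 𝒴)) :=
  {p | 1 - α ≤ LS V lh p.1 (V p.2) /
      (LS V lh p.1 (V p.2) + US V uh p.1 (V p.2) + uh p.2.1)}

/-- weighted indicator of badness of coordinate `j` within a joint sample. -/
noncomputable def gfun (w : 𝒳 × 𝒴 → ℝ) (V : 𝒳 × 𝒴 → ℝ) (lh uh : 𝒳 → ℝ) (α : ℝ)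
    {N : ℕ} (j : Fin N) (s : Fin N → 𝒳 × 𝒴) : ℝ≥0∞ :=
  ENNReal.ofReal (w (s j)) *
    (if 1 - α ≤ LS V lh s (V (s j)) / (LS V lh s (V (s j)) + US V uh s (V (s j)))
      then 1 else 0)

variable {V w : 𝒳 × 𝒴 → ℝ} {lh uh : 𝒳 → ℝ} {α : ℝ} {n N : ℕ}

lemma LS_meas_pair (hV : Measurable V) (hlh : Measurable lh) :
    Measurable (fun p : (Fin n → 𝒳 × 𝒴) × (𝒳 × 𝒴) => LS V lh p.1 (V p.2)) := by
  unfold LS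
  refine Finset.measurable_sum univ fun i _ => ?_
  refine Measurable.ite (measurableSet_lt (hV.comp ((measurable_pi_apply i).comp measurable_fst))
      (hV.comp measurable_snd)) ?_ measurable_const
  exact hlh.comp (measurable_fst.comp ((measurable_pi_apply i).comp measurable_fst))

lemma US_meas_pair (hV : Measurable V) (huh : Measurable uh) :
    Measurable (fun p : (Fin n → 𝒳 × 𝒴) × (𝒳 × 𝒴) => US V uh p.1 (V p.2)) := by
  unfold US
  refine Finset.measurable_sum univ fun i _ => ?_
  refine Measurable.ite (measurableSet_lt (hV.comp ((measurable_pi_apply i).comp measurable_fst))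
      (hV.comp measurable_snd)).compl ?_ measurable_const
  exact huh.comp (measurable_fst.comp ((measurable_pi_apply i).comp measurable_fst))

lemma BadSet_meas (hV : Measurable V) (hlh : Measurable lh) (huh : Measurable uh) :
    MeasurableSet (BadSet V lh uh α n) := by
  unfold BadSet
  apply measurableSet_le measurable_const
  exact (LS_meas_pair hV hlh).div (((LS_meas_pair hV hlh).add (US_meas_pair hV huh)).add
    (huh.comp (measurable_fst.comp measurable_snd)))

lemma gfun_meas (hw : Measurable w) (hV : Measurable V) (hlh : Measurable lh)
    (huh : Measurable uh) (j : Fin N) :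
    Measurable (gfun w V lh uh α j) := by
  unfold gfun
  refine Measurable.mul ((ENNReal.measurable_ofReal).comp (hw.comp (measurable_pi_apply j))) ?_
  have hLm : Measurable (fun s : Fin N → 𝒳 × 𝒴 => LS V lh s (V (s j))) := by
    unfold LS
    refine Finset.measurable_sum univ fun i _ => ?_
    refine Measurable.ite (measurableSet_lt (hV.comp (measurable_pi_apply i))
        (hV.comp (measurable_pi_apply j))) ?_ measurable_const
    exact hlh.comp (measurable_fst.comp (measurable_pi_apply i))
  have hUm : Measurable (fun s : Fin N → 𝒳 × 𝒴 => US V uh s (V (s j))) := by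
    unfold US
    refine Finset.measurable_sum univ fun i _ => ?_
    refine Measurable.ite (measurableSet_lt (hV.comp (measurable_pi_apply i))
        (hV.comp (measurable_pi_apply j))).compl ?_ measurable_const
    exact huh.comp (measurable_fst.comp (measurable_pi_apply i))
  exact Measurable.ite (measurableSet_le measurable_const (hLm.div (hLm.add hUm)))
    measurable_const measurable_const

/-- Non-coverage implies membership in the bad set. -/
lemma not_covered_mem_bad (hlpos : ∀ x, 0 < lh x) (hlu : ∀ x, lh x ≤ uh x)
    (p : (Fin n → 𝒳 × 𝒴) × (𝒳 × 𝒴)) (h : ¬ Covered n V lh uh α p.1 p.2) :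
    p ∈ BadSet V lh uh α n := by
  have hb := not_covered_bad n V lh uh α hlpos hlu p.1 p.2 h
  simp only [Finset.sum_filter] at hb
  exact hb

/-- Under the snoc correspondence, the indicator of the bad set becomes `gfun` at the
last coordinate. -/
lemma snoc_indicator_eq (s : Fin (n+1) → 𝒳 × 𝒴) :
    (BadSet V lh uh α n).indicator (fun p => ENNReal.ofReal (w p.2))
      ((fun i : Fin n => s i.castSucc, s (Fin.last n)) : (Fin n → 𝒳 × 𝒴) × (𝒳 × 𝒴))
      = gfun w V lh uh α (Fin.last n) s := by
  set t := V (s (Fin.last n)) with ht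
  have hL : LS V lh (fun i : Fin n => s i.castSucc) t = LS V lh s t := by
    unfold LS
    rw [Fin.sum_univ_castSucc, if_neg (lt_irrefl _), add_zero]
  have hU : US V uh (fun i : Fin n => s i.castSucc) t + uh (s (Fin.last n)).1 = US V uh s t := by
    unfold US
    rw [Fin.sum_univ_castSucc, if_pos (lt_irrefl _)]
  have hcond : ((fun i : Fin n => s i.castSucc, s (Fin.last n)) : (Fin n → 𝒳 × 𝒴) × (𝒳 × 𝒴))
      ∈ BadSet V lh uh α n
      ↔ 1 - α ≤ LS V lh s t / (LS V lh s t + US V uh s t) := by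
    unfold BadSet
    rw [Set.mem_setOf_eq]
    rw [show LS V lh (fun i : Fin n => s i.castSucc) t + US V uh (fun i : Fin n => s i.castSucc) t
        + uh (s (Fin.last n)).1 = LS V lh s t + US V uh s t by rw [← hL, ← hU]; ring, hL]
  by_cases hmem : ((fun i : Fin n => s i.castSucc, s (Fin.last n)) : (Fin n → 𝒳 × 𝒴) × (𝒳 × 𝒴))
      ∈ BadSet V lh uh α n
  · rw [Set.indicator_of_mem hmem]
    unfold gfun
    rw [if_pos (by rw [← ht]; exact hcond.mp hmem), mul_one]
  · rw [Set.indicator_of_notMem hmem]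
    unfold gfun
    rw [if_neg (by rw [← ht]; exact fun hc => hmem (hcond.mpr hc)), mul_zero]

/-- `gfun` is equivariant under permutations of the sample. -/
lemma gfun_perm (e : Equiv.Perm (Fin N)) (j : Fin N) (s : Fin N → 𝒳 × 𝒴) :
    gfun w V lh uh α j (s ∘ e) = gfun w V lh uh α (e j) s := by
  have hL : ∀ t, LS V lh (s ∘ e) t = LS V lh s t := by
    intro t
    unfold LS
    exact Equiv.sum_comp e (fun i => if V (s i) < t then lh (s i).1 else 0)
  have hU : ∀ t, US V uh (s ∘ e) t = US V uh s t := by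
    intro t
    unfold US
    exact Equiv.sum_comp e (fun i => if ¬ V (s i) < t then uh (s i).1 else 0)
  unfold gfun
  simp only [Function.comp_apply, hL, hU]

/-- Pointwise deterministic bound on the sum of `gfun`s. -/
lemma gfun_sum_le (hα : 0 < α ∧ α < 1) (hlpos : ∀ x, 0 < lh x) (hlu : ∀ x, lh x ≤ uh x)
    (s : Fin N → 𝒳 × 𝒴) (hs : ∀ j, lh (s j).1 ≤ w (s j) ∧ w (s j) ≤ uh (s j).1) :
    ∑ j, gfun w V lh uh α j s ≤ ENNReal.ofReal α * ∑ j, ENNReal.ofReal (w (s j)) := by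
  classical
  have hwnn : ∀ j : Fin N, 0 ≤ w (s j) := fun j => le_trans (hlpos _).le (hs j).1
  have hdet := det_bound (fun j : Fin N => V (s j)) (fun j => w (s j)) (fun j => lh (s j).1)
    (fun j => uh (s j).1) α hα (fun j => hlpos _) (fun j => (hs j).1) (fun j => (hs j).2)
  simp only [Finset.sum_filter] at hdet
  have h1 : ∑ j, gfun w V lh uh α j s
      = ∑ j ∈ univ.filter (fun j : Fin N =>
          1 - α ≤ LS V lh s (V (s j)) / (LS V lh s (V (s j)) + US V uh s (V (s j)))),
          ENNReal.ofReal (w (s j)) := by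
    rw [Finset.sum_filter]
    refine Finset.sum_congr rfl fun j _ => ?_
    unfold gfun
    by_cases hc : 1 - α ≤ LS V lh s (V (s j)) / (LS V lh s (V (s j)) + US V uh s (V (s j)))
    · rw [if_pos hc, if_pos hc, mul_one]
    · rw [if_neg hc, if_neg hc, mul_zero]
  rw [h1, ← ENNReal.ofReal_sum_of_nonneg (fun j _ => hwnn j),
    ← ENNReal.ofReal_sum_of_nonneg (fun j _ => hwnn j), ← ENNReal.ofReal_mul hα.1.le]
  apply ENNReal.ofReal_le_ofReal
  refine le_trans ?_ hdet
  apply le_of_eq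
  rw [Finset.sum_filter]
  refine Finset.sum_congr rfl fun j _ => ?_
  unfold LS US
  rfl

end Bridge
theorem robust_conformal_marginal_coverage
    {𝒳 𝒴 : Type*} [MeasurableSpace 𝒳] [MeasurableSpace 𝒴]
    (n : ℕ) (P : Measure (𝒳 × 𝒴)) [IsProbabilityMeasure P]
    (w : 𝒳 × 𝒴 → ℝ) (hw : Measurable w) (hw0 : ∀ z, 0 ≤ w z)
    (Pt : Measure (𝒳 × 𝒴)) [IsProbabilityMeasure Pt]
    (hPt : Pt = P.withDensity (fun z => ENNReal.ofReal (w z)))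
    (V : 𝒳 × 𝒴 → ℝ) (hV : Measurable V)
    (lh uh : 𝒳 → ℝ) (hlh : Measurable lh) (huh : Measurable uh)
    (hlpos : ∀ x, 0 < lh x) (hlu : ∀ x, lh x ≤ uh x)
    (hbound : ∀ᵐ z ∂P, lh z.1 ≤ w z ∧ w z ≤ uh z.1)
    (α : ℝ) (hα : 0 < α ∧ α < 1) :
    ENNReal.ofReal (1 - α)
      ≤ ((Measure.pi fun _ : Fin n => P).prod Pt)
          {p : (Fin n → 𝒳 × 𝒴) × (𝒳 × 𝒴) | Covered n V lh uh α p.1 p.2} := by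
  classical
  set μn := (Measure.pi fun _ : Fin n => P) with hμn
  set PiM := (Measure.pi fun _ : Fin (n+1) => P) with hPiM
  set A : Set ((Fin n → 𝒳 × 𝒴) × (𝒳 × 𝒴)) := {p | Covered n V lh uh α p.1 p.2} with hAdef
  set B := BadSet V lh uh α n with hBdef
  have hwE : Measurable (fun z : 𝒳 × 𝒴 => ENNReal.ofReal (w z)) :=
    ENNReal.measurable_ofReal.comp hw
  have hBmeas : MeasurableSet B := BadSet_meas hV hlh huh
  have hsub : Aᶜ ⊆ B := fun p hp => not_covered_mem_bad hlpos hlu p hp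
  haveI hPtd : IsProbabilityMeasure (P.withDensity fun z => ENNReal.ofReal (w z)) := by
    rw [← hPt]; infer_instance
  have hB1 : (μn.prod Pt) B
      = ∫⁻ p, B.indicator (fun p => ENNReal.ofReal (w p.2)) p ∂(μn.prod P) := by
    rw [hPt]
    exact prod_withDensity_apply μn P _ hwE hBmeas
  have hhm : Measurable (fun p : (Fin n → 𝒳 × 𝒴) × (𝒳 × 𝒴) =>
      B.indicator (fun p => ENNReal.ofReal (w p.2)) p) :=
    (hwE.comp measurable_snd).indicator hBmeas
  have hΨ := snoc_mp P n
  have hB2 : ∫⁻ p, B.indicator (fun p => ENNReal.ofReal (w p.2)) p ∂(μn.prod P)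
      = ∫⁻ s, gfun w V lh uh α (Fin.last n) s ∂PiM := by
    rw [← hΨ.lintegral_comp hhm]
    exact lintegral_congr fun s => snoc_indicator_eq s
  have hgm : ∀ j : Fin (n+1), Measurable (gfun (𝒳 := 𝒳) (𝒴 := 𝒴) w V lh uh α j) :=
    fun j => gfun_meas hw hV hlh huh j
  have hinv : ∀ j : Fin (n+1), ∫⁻ s, gfun w V lh uh α j s ∂PiM
      = ∫⁻ s, gfun w V lh uh α (Fin.last n) s ∂PiM := by
    intro j
    have hpe := perm_mp P n (Equiv.swap j (Fin.last n))
    rw [← hpe.lintegral_comp (hgm j)]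
    refine lintegral_congr fun s => ?_
    show gfun w V lh uh α j (s ∘ (Equiv.swap j (Fin.last n))) = _
    rw [gfun_perm, Equiv.swap_apply_left]
  have hae : ∀ᵐ s ∂PiM, ∀ j : Fin (n+1), lh (s j).1 ≤ w (s j) ∧ w (s j) ≤ uh (s j).1 := by
    rw [ae_all_iff]
    intro j
    have hQm : MeasurableSet {z : 𝒳 × 𝒴 | ¬ (lh z.1 ≤ w z ∧ w z ≤ uh z.1)} :=
      ((measurableSet_le (hlh.comp measurable_fst) hw).inter
        (measurableSet_le hw (huh.comp measurable_fst))).compl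
    have h0 : P {z : 𝒳 × 𝒴 | ¬ (lh z.1 ≤ w z ∧ w z ≤ uh z.1)} = 0 := ae_iff.mp hbound
    rw [ae_iff]
    have heq : {s : Fin (n+1) → 𝒳 × 𝒴 | ¬ (lh (s j).1 ≤ w (s j) ∧ w (s j) ≤ uh (s j).1)}
        = (fun s : Fin (n+1) → 𝒳 × 𝒴 => s j) ⁻¹'
          {z : 𝒳 × 𝒴 | ¬ (lh z.1 ≤ w z ∧ w z ≤ uh z.1)} := rfl
    rw [heq, (eval_mp P n j).measure_preimage hQm.nullMeasurableSet]
    exact h0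
  have hone : ∀ j : Fin (n+1), ∫⁻ s, ENNReal.ofReal (w (s j)) ∂PiM = 1 := by
    intro j
    calc ∫⁻ s, ENNReal.ofReal (w (s j)) ∂PiM = ∫⁻ z, ENNReal.ofReal (w z) ∂P :=
        (eval_mp P n j).lintegral_comp hwE
      _ = Pt Set.univ := by
          rw [hPt, withDensity_apply _ MeasurableSet.univ, setLIntegral_univ]
      _ = 1 := measure_univ
  have hlhs : (((n:ℝ≥0∞) + 1)) * (μn.prod Pt) B
      = ∑ j : Fin (n+1), ∫⁻ s, gfun w V lh uh α j s ∂PiM := by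
    rw [hB1, hB2, Finset.sum_congr rfl (fun j _ => hinv j), Finset.sum_const, card_univ,
      Fintype.card_fin, nsmul_eq_mul]
    push_cast
    ring
  have hrhs : ∑ j : Fin (n+1), ∫⁻ s, gfun w V lh uh α j s ∂PiM
      ≤ ((n:ℝ≥0∞) + 1) * ENNReal.ofReal α := by
    rw [← lintegral_finset_sum univ (fun j _ => hgm j)]
    have hb : ∫⁻ s, ∑ j, gfun w V lh uh α j s ∂PiM
        ≤ ∫⁻ s, ENNReal.ofReal α * ∑ j, ENNReal.ofReal (w (s j)) ∂PiM :=
      lintegral_mono_ae (hae.mono fun s hs => gfun_sum_le hα hlpos hlu s hs)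
    refine le_trans hb ?_
    have hsm : ∀ j : Fin (n+1), Measurable (fun s : Fin (n+1) → 𝒳 × 𝒴 => ENNReal.ofReal (w (s j))) :=
      fun j => hwE.comp (measurable_pi_apply j)
    rw [lintegral_const_mul _ (Finset.measurable_sum univ fun j _ => hsm j)]
    rw [lintegral_finset_sum univ (fun j _ => hsm j)]
    rw [Finset.sum_congr rfl (fun j _ => hone j), Finset.sum_const, card_univ, Fintype.card_fin]
    apply le_of_eq
    push_cast
    ring
  have hkey : (μn.prod Pt) B ≤ ENNReal.ofReal α := by
    have hmain := le_trans (le_of_eq hlhs) hrhs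
    have hne0 : ((n:ℝ≥0∞) + 1) ≠ 0 := by simp
    have hnetop : ((n:ℝ≥0∞) + 1) ≠ ⊤ := by simp
    exact (ENNReal.mul_le_mul_iff_right hne0 hnetop).mp hmain
  have hsum1 : ENNReal.ofReal (1 - α) + ENNReal.ofReal α = 1 := by
    rw [← ENNReal.ofReal_add (by linarith [hα.2]) hα.1.le]
    norm_num
  have h1le : (1:ℝ≥0∞) ≤ (μn.prod Pt) A + ENNReal.ofReal α := by
    calc (1:ℝ≥0∞) = (μn.prod Pt) Set.univ := measure_univ.symm
      _ = (μn.prod Pt) (A ∪ Aᶜ) := by rw [Set.union_compl_self]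
      _ ≤ (μn.prod Pt) A + (μn.prod Pt) Aᶜ := measure_union_le _ _
      _ ≤ (μn.prod Pt) A + ENNReal.ofReal α :=
          by gcongr; exact le_trans (measure_mono hsub) hkey
  have h2 : ENNReal.ofReal (1 - α) + ENNReal.ofReal α ≤ (μn.prod Pt) A + ENNReal.ofReal α := by
    rw [hsum1]; exact h1le
  exact (ENNReal.add_le_add_iff_right ENNReal.ofReal_ne_top).mp h2
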